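/- For every x ∈ X the limit Φ(x) := lim_{δ↓0} (φ(x) − φ_δ(x))/δ exists and lies in [0,1]. Moreover Φ(x) = 1 for every x ∈ Z, and Φ(x) = 0 for every x ∈ X ∖ S(Z). -/

import Mathlib

open Filter Topology

/-- The limit `Φ(x) = lim_{δ↓0} (φ(x) − φ_δ(x))/δ` exists in `[0,1]` at every point,
equals `1` on `Z`, and equals `0` outside the saturation `S(Z)` of `Z`. -/
theorem stmt_8 {X : Type*} [TopologicalSpace X] [Nonempty X]
    (d : X → X → ℝ)
    (hd_nonneg : ∀ x y, 0 ≤ d x y)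
    (hd_refl : ∀ x, d x x = 0)
    (hd_tri : ∀ x y z, d x y ≤ d x z + d z y)
    (hd_cont : Continuous fun p : X × X => d p.1 p.2)
    (φ : X → ℝ) (hφ : ∀ x y, φ y - φ x ≤ d x y)
    (Z : Set X) (hZne : Z.Nonempty) (hZc : IsCompact Z)
    (φd : ℝ → X → ℝ)
    (hφd : ∀ δ : ℝ, 0 < δ → ∀ x,
      φd δ x = ⨅ y : X, (φ y + d y x - δ * Set.indicator Z (fun _ => (1 : ℝ)) y)) :
    ∀ x : X, ∃ L : ℝ, L ∈ Set.Icc (0 : ℝ) 1 ∧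
      Tendsto (fun δ : ℝ => (φ x - φd δ x) / δ) (𝓝[>] (0 : ℝ)) (𝓝 L) ∧
      (x ∈ Z → L = 1) ∧
      ((¬ ∃ y ∈ Z, φ y - φ x = d x y ∨ φ x - φ y = d y x) → L = 0) := by
  -- φ is continuous
  have hφc : Continuous φ := by
    rw [continuous_iff_continuousAt]
    intro x₀
    have hdl : Tendsto (fun y => d y x₀) (𝓝 x₀) (𝓝 0) := by
      have hc : Continuous (fun y : X => d y x₀) :=
        hd_cont.comp ((continuous_id.prodMk continuous_const :
          Continuous fun y : X => (y, x₀)))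
      have := hc.tendsto x₀
      simpa [hd_refl] using this
    have hdr : Tendsto (fun y => d x₀ y) (𝓝 x₀) (𝓝 0) := by
      have hc : Continuous (fun y : X => d x₀ y) :=
        hd_cont.comp ((continuous_const.prodMk continuous_id :
          Continuous fun y : X => (x₀, y)))
      have := hc.tendsto x₀
      simpa [hd_refl] using this
    have h1 : Tendsto (fun y => φ x₀ - d y x₀) (𝓝 x₀) (𝓝 (φ x₀)) := by
      simpa using (tendsto_const_nhds (x := φ x₀)).sub hdl
    have h2 : Tendsto (fun y => φ x₀ + d x₀ y) (𝓝 x₀) (𝓝 (φ x₀)) := by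
      simpa using (tendsto_const_nhds (x := φ x₀)).add hdr
    exact tendsto_of_tendsto_of_tendsto_of_le_of_le h1 h2
      (fun y => by have := hφ y x₀; linarith) (fun y => by have := hφ x₀ y; linarith)
  intro x
  -- minimizer of f y = φ y + d y x on Z
  have hfc : Continuous (fun y => φ y + d y x) :=
    hφc.add (hd_cont.comp (continuous_id.prodMk continuous_const))
  obtain ⟨y₀, hy₀Z, hy₀min⟩ := hZc.exists_isMinOn hZne hfc.continuousOn
  set a : ℝ := φ y₀ + d y₀ x - φ x with ha_def
  have ha0 : 0 ≤ a := by have := hφ y₀ x; simp only [ha_def]; linarith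
  -- key formula for φd
  have hkey : ∀ δ : ℝ, 0 < δ → φd δ x = min (φ x) (φ y₀ + d y₀ x - δ) := by
    intro δ hδ
    rw [hφd δ hδ x]
    have hbdd : BddBelow (Set.range fun y =>
        φ y + d y x - δ * Set.indicator Z (fun _ => (1 : ℝ)) y) := by
      refine ⟨φ x - δ, ?_⟩
      rintro _ ⟨y, rfl⟩
      have h1 : φ x - φ y ≤ d y x := hφ y x
      have h2 : Set.indicator Z (fun _ => (1 : ℝ)) y ≤ 1 := by
        by_cases hy : y ∈ Z <;> simp [hy]
      have h3 : δ * Set.indicator Z (fun _ => (1 : ℝ)) y ≤ δ * 1 :=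
        mul_le_mul_of_nonneg_left h2 hδ.le
      dsimp only
      linarith
    apply le_antisymm
    · apply le_min
      · calc (⨅ y : X, (φ y + d y x - δ * Set.indicator Z (fun _ => (1:ℝ)) y))
            ≤ φ x + d x x - δ * Set.indicator Z (fun _ => (1:ℝ)) x := ciInf_le hbdd x
          _ ≤ φ x := by
              have h2 : 0 ≤ Set.indicator Z (fun _ => (1 : ℝ)) x := by
                by_cases hx : x ∈ Z <;> simp [hx]
              rw [hd_refl]; nlinarith
      · calc (⨅ y : X, (φ y + d y x - δ * Set.indicator Z (fun _ => (1:ℝ)) y))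
            ≤ φ y₀ + d y₀ x - δ * Set.indicator Z (fun _ => (1:ℝ)) y₀ := ciInf_le hbdd y₀
          _ = φ y₀ + d y₀ x - δ := by rw [Set.indicator_of_mem hy₀Z]; ring
    · apply le_ciInf
      intro y
      by_cases hy : y ∈ Z
      · rw [Set.indicator_of_mem hy]
        have := hy₀min hy
        simp only [Set.mem_setOf_eq] at this
        calc min (φ x) (φ y₀ + d y₀ x - δ) ≤ φ y₀ + d y₀ x - δ := min_le_right _ _
          _ ≤ φ y + d y x - δ * 1 := by simpa using this
      · rw [Set.indicator_of_notMem hy]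
        have := hφ y x
        calc min (φ x) (φ y₀ + d y₀ x - δ) ≤ φ x := min_le_left _ _
          _ ≤ φ y + d y x - δ * 0 := by linarith
  by_cases haz : a = 0
  · -- L = 1
    refine ⟨1, by norm_num, ?_, fun _ => rfl, ?_⟩
    · apply Tendsto.congr' _ tendsto_const_nhds
      filter_upwards [self_mem_nhdsWithin] with δ (hδ : 0 < δ)
      rw [hkey δ hδ]
      have : φ y₀ + d y₀ x = φ x := by simp only [ha_def] at haz; linarith
      rw [this, min_eq_right (by linarith)]
      field_simp
      ring
    · intro hS
      exfalso
      exact hS ⟨y₀, hy₀Z, Or.inr (by simp only [ha_def] at haz; linarith)⟩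
  · -- a > 0, L = 0
    have ha : 0 < a := lt_of_le_of_ne ha0 (Ne.symm haz)
    refine ⟨0, by norm_num, ?_, ?_, fun _ => rfl⟩
    · apply Tendsto.congr' _ tendsto_const_nhds
      filter_upwards [Ioo_mem_nhdsGT_of_mem (Set.mem_Ico.mpr ⟨le_refl 0, ha⟩)]
        with δ hδ
      obtain ⟨hδ0, hδa⟩ := hδ
      rw [hkey δ hδ0, min_eq_left (by simp only [ha_def] at hδa ⊢; linarith)]
      simp
    · intro hxZ
      exfalso
      have := hy₀min hxZ
      simp only [Set.mem_setOf_eq] at this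
      rw [hd_refl] at this
      simp only [ha_def] at ha
      linarith
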